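/- Suppose m ∈ ℕ, 0 ≤ i ≤ n, and d ∈ U_1. Then the annihilator of σ−d in R_mG_i equals the ideal ⟨p^k Q_d(i,0)⟩, where k = min{v ≥ 0 : p^v(d^{p^i}−1) ≡ 0 mod p^m}. -/

import Mathlib

open scoped BigOperators

/-- `U_i = 1 + p^i ℤ` as a subset of `ℤ`. -/
def Uset (p i : ℕ) : Set ℤ := {d : ℤ | ∃ k : ℤ, d = 1 + (p : ℤ) ^ i * k}

/-- `−U_i = {−u : u ∈ U_i}` as a subset of `ℤ`. -/
def negUset (p i : ℕ) : Set ℤ := {d : ℤ | -d ∈ Uset p i}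

/-- The coefficient ring `R_m = ℤ/p^mℤ`. -/
abbrev Rm (p m : ℕ) : Type := ZMod (p ^ m)

/-- The cyclic group of order `p^n`, written multiplicatively. -/
abbrev Cyc (p n : ℕ) : Type := Multiplicative (ZMod (p ^ n))

/-- The group ring `R_m G_n` of the cyclic group of order `p^n` over `ℤ/p^mℤ`. -/
abbrev RG (p m n : ℕ) : Type := MonoidAlgebra (Rm p m) (Cyc p n)

/-- The distinguished generator `σ` of the cyclic group of order `p^n`,
viewed as an element of the group ring `R_m G_n`. -/
noncomputable def sg (p m n : ℕ) : RG p m n :=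
  MonoidAlgebra.of (Rm p m) (Cyc p n) (Multiplicative.ofAdd (1 : ZMod (p ^ n)))

/-- The norm operator `P(i,j) = Σ_{k=0}^{p^{i-j}-1} σ^{k p^j}` in `R_m G_n`. -/
noncomputable def Pel (p m n i j : ℕ) : RG p m n :=
  ∑ k ∈ Finset.range (p ^ (i - j)), sg p m n ^ (k * p ^ j)

/-- The operator `Q_d(i,j) = Σ_{k=0}^{p^{i-j}-1} (d^{p^j})^{p^{i-j}-1-k} (σ^{p^j})^k` in `R_m G_n`. -/
noncomputable def Qel (p m n : ℕ) (d : ℤ) (i j : ℕ) : RG p m n :=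
  ∑ k ∈ Finset.range (p ^ (i - j)),
    ((d : RG p m n) ^ p ^ j) ^ (p ^ (i - j) - 1 - k) * sg p m n ^ (p ^ j * k)

/-- `p^a` for `a ∈ {−∞} ∪ ℕ`, with the convention `p^{−∞} = 0`. -/
def pexp (p : ℕ) (a : WithBot ℕ) : ℕ := WithBot.recBotCoe 0 (fun k => p ^ k) a

/-- `σ^{p^a}` for `a ∈ {−∞} ∪ ℕ`, with the convention `σ^{p^{−∞}} = 0`. -/
noncomputable def sigmaPow (p m n : ℕ) (a : WithBot ℕ) : RG p m n :=
  WithBot.recBotCoe 0 (fun k => sg p m n ^ p ^ k) a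

/-- `P(i,c)` for `c ∈ {−∞} ∪ ℕ`, with the convention `P(i,−∞) = 1`. -/
noncomputable def PelW (p m n i : ℕ) (c : WithBot ℕ) : RG p m n :=
  WithBot.recBotCoe 1 (fun k => Pel p m n i k) c

/-- The submodule of relations defining `X_{a,d,m}`: the free module on generators
`y = e 0` and `x_i = e (i+1)` modulo `(σ-d)y = Σ p^i x_i` and `σ^{p^{a_i}} x_i = x_i`
(where `σ^{p^{−∞}} x_i = 0`). -/
noncomputable def Xrel (p m n : ℕ) (a : ℕ → WithBot ℕ) (d : ℤ) :
    Submodule (RG p m n) (Fin (m + 1) → RG p m n) :=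
  Submodule.span (RG p m n)
    (insert
      ((sg p m n - (d : RG p m n)) •
          (Pi.single (0 : Fin (m + 1)) 1 : Fin (m + 1) → RG p m n) -
        ∑ i : Fin m, ((p : RG p m n) ^ (i : ℕ)) •
          (Pi.single i.succ 1 : Fin (m + 1) → RG p m n))
      (Set.range fun i : Fin m =>
        (sigmaPow p m n (a (i : ℕ)) - 1) •
          (Pi.single i.succ 1 : Fin (m + 1) → RG p m n)))

/-- The `R_m G`-module `X_{a,d,m}`. -/
abbrev Xmod (p m n : ℕ) (a : ℕ → WithBot ℕ) (d : ℤ) : Type :=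
  (Fin (m + 1) → RG p m n) ⧸ Xrel p m n a d

/-- The generator `y` of `X_{a,d,m}`. -/
noncomputable def Xy (p m n : ℕ) (a : ℕ → WithBot ℕ) (d : ℤ) : Xmod p m n a d :=
  Submodule.Quotient.mk (Pi.single (0 : Fin (m + 1)) 1 : Fin (m + 1) → RG p m n)

/-- The generator `x_i` of `X_{a,d,m}`. -/
noncomputable def Xx (p m n : ℕ) (a : ℕ → WithBot ℕ) (d : ℤ) (i : Fin m) : Xmod p m n a d :=
  Submodule.Quotient.mk (Pi.single i.succ 1 : Fin (m + 1) → RG p m n)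

/-- A module is indecomposable if it is nonzero and is not the direct sum of two
nonzero submodules. -/
def IsIndecomposableModule (R M : Type*) [Ring R] [AddCommGroup M] [Module R M] : Prop :=
  Nontrivial M ∧ ∀ V W : Submodule R M, IsCompl V W → V = ⊥ ∨ W = ⊥

/-- Hypotheses (I)–(V) of Theorem 1, together with the requirement
`a ∈ {−∞,0,1,…,n}^m`. -/
def Hyp (p n m : ℕ) (a : ℕ → WithBot ℕ) (d : ℤ) : Prop :=
  (∀ i < m, a i ≤ (n : WithBot ℕ)) ∧
  d ∈ Uset p 1 ∧
  (∀ i < m, d ^ pexp p (a i) ∈ Uset p (i + 1)) ∧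
  (∀ i j : ℕ, i < m → 1 ≤ j → i + j < m → a (i + j) ≠ ⊥ →
    ¬(p = 2 ∧ d ∉ Uset p 2 ∧ i = 0 ∧ a 0 = 0) →
    a i + (j : WithBot ℕ) < a (i + j)) ∧
  (p = 2 → d ∉ Uset p 2 → a 0 = 0 → ∀ j, 1 ≤ j → j < m → a j ≠ 0) ∧
  (p = 2 → n = 1 → a 0 = ⊥) ∧
  (∀ v : ℕ, p = 2 → 2 ≤ m → 2 ≤ v → d ∈ negUset p v → d ∉ negUset p (v + 1) →
    a 0 = 0 → ∀ i, v ≤ i → i < m → ((i - (v - 1) : ℕ) : WithBot ℕ) < a i ∧ a i ≠ ⊥)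

/-- The invariant `l(u)`: the dimension over `F_p` of the `F_p G`-submodule of `M/pM`
generated by the class of `u`; equivalently the least `k` with `(σ-1)^k u ∈ pM`. -/
noncomputable def ell (p m n : ℕ) {M : Type*} [AddCommGroup M] [Module (RG p m n) M]
    (u : M) : ℕ :=
  sInf {k : ℕ | ((sg p m n - 1) ^ k) • u ∈
    (Ideal.span {(p : RG p m n)} • (⊤ : Submodule (RG p m n) M) : Submodule (RG p m n) M)}

/-- `M^⋆ = {u ∈ M : (σ-1)u = 0 and pu = 0}`. -/
def Mstar (p m n : ℕ) (M : Type*) [AddCommGroup M] [Module (RG p m n) M] : Set M :=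
  {u : M | (sg p m n - 1) • u = 0 ∧ (p : RG p m n) • u = 0}
/-- The group ring `ℤG` of the cyclic group of order `p^n`. -/
abbrev ZG (p n : ℕ) : Type := MonoidAlgebra ℤ (Cyc p n)

/-- The generator `σ` as an element of `ℤG`. -/
noncomputable def sgZ (p n : ℕ) : ZG p n :=
  MonoidAlgebra.of ℤ (Cyc p n) (Multiplicative.ofAdd (1 : ZMod (p ^ n)))

/-- The norm operator `P(i,j)` as an element of `ℤG`. -/
noncomputable def PelZ (p n i j : ℕ) : ZG p n :=
  ∑ k ∈ Finset.range (p ^ (i - j)), sgZ p n ^ (k * p ^ j)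

/-- The additive map `φ_d : ℤG → ℤ` induced by `σ^t ↦ d^t` for `0 ≤ t < p^n`. -/
noncomputable def phiZ (p n : ℕ) (d : ℤ) (f : ZG p n) : ℤ :=
  ∑ t ∈ Finset.range (p ^ n), f.coeff (Multiplicative.ofAdd ((t : ℕ) : ZMod (p ^ n))) * d ^ t

/-- The map `φ_d^{(m)} : R_m G_n → R_m` induced by `σ^t ↦ d^t` for `0 ≤ t < p^n`. -/
noncomputable def phiM (p m n : ℕ) (d : ℤ) (f : RG p m n) : Rm p m :=
  ∑ t ∈ Finset.range (p ^ n), f.coeff (Multiplicative.ofAdd ((t : ℕ) : ZMod (p ^ n))) * (d : Rm p m) ^ t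

/-- The natural `R_m`-algebra homomorphism `χ_j : R_m G_i → R_m G_j` for `j ≤ i`. -/
noncomputable def chiMap (p m : ℕ) {i j : ℕ} (h : j ≤ i) : RG p m i →+* RG p m j :=
  MonoidAlgebra.mapDomainRingHom (Rm p m)
    (AddMonoidHom.toMultiplicative
      ((ZMod.castHom (pow_dvd_pow p h) (ZMod (p ^ j))).toAddMonoidHom))

/-- Coefficient reduction `R_m G_n → R_{m-1} G_n`. -/
noncomputable def barMap (p m n : ℕ) (f : RG p m n) : RG p (m - 1) n :=
  MonoidAlgebra.ofCoeff (Finsupp.mapRange (ZMod.castHom (pow_dvd_pow p (Nat.sub_le m 1)) (ZMod (p ^ (m - 1))))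
    (map_zero _) f.coeff)

/-- `W/p^{m-1}W` is a free `R_{m-1}G_k`-module: there is an additive isomorphism with
a finite power of `R_{m-1}G_k` intertwining the actions of `σ` (and hence of the
coefficients, which act through the additive group structure). -/
def QuotFree (p m n k : ℕ) {M : Type*} [AddCommGroup M] [Module (RG p m n) M]
    (W : Submodule (RG p m n) M) : Prop :=
  ∃ (r : ℕ) (e : (W ⧸ (Ideal.span {(p : RG p m n) ^ (m - 1)} •
      (⊤ : Submodule (RG p m n) W))) ≃+ (Fin r → RG p (m - 1) k)),
    ∀ q, e (sg p m n • q) = fun s => sg p (m - 1) k * e q s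
private lemma sg_pow (p m n t : ℕ) : sg p m n ^ t =
    MonoidAlgebra.of (Rm p m) (Cyc p n) (Multiplicative.ofAdd ((t : ZMod (p ^ n)))) := by
  rw [sg, ← map_pow]
  congr 1
  rw [← ofAdd_nsmul]
  simp

private lemma sg_pow_card (p m n : ℕ) : sg p m n ^ p ^ n = 1 := by
  rw [sg_pow]
  simp [MonoidAlgebra.of_apply]
  rfl

private lemma aeval_surj (p m n : ℕ) (hp : 0 < p) (s : RG p m n) :
    ∃ S : Polynomial (Rm p m), Polynomial.aeval (sg p m n) S = s := by
  induction s using MonoidAlgebra.induction_on with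
  | of g =>
      haveI : NeZero (p ^ n) := ⟨(pow_pos hp n).ne'⟩
      refine ⟨Polynomial.X ^ (Multiplicative.toAdd g).val, ?_⟩
      rw [map_pow, Polynomial.aeval_X, sg_pow]
      congr 1
      simp [ZMod.natCast_val, ZMod.cast_id]
  | add f g hf hg =>
      obtain ⟨S, hS⟩ := hf; obtain ⟨T, hT⟩ := hg
      exact ⟨S + T, by rw [map_add, hS, hT]⟩
  | smul r f hf =>
      obtain ⟨S, hS⟩ := hf
      exact ⟨Polynomial.C r * S, by rw [map_mul, Polynomial.aeval_C, hS]; exact (Algebra.smul_def r f).symm⟩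

private lemma aeval_ker (p m n : ℕ) (hp : 0 < p) (S : Polynomial (Rm p m))
    (hdeg : S.degree < ((p ^ n : ℕ) : WithBot ℕ))
    (h0 : Polynomial.aeval (sg p m n) S = 0) : S = 0 := by
  haveI : NeZero (p ^ n) := ⟨(pow_pos hp n).ne'⟩
  rcases eq_or_ne S 0 with rfl | hS
  · rfl
  exfalso
  have hnd : S.natDegree < p ^ n := (Polynomial.natDegree_lt_iff_degree_lt hS).mpr hdeg
  have hsum : (∑ t ∈ Finset.range (p ^ n),
      MonoidAlgebra.single (Multiplicative.ofAdd ((t : ZMod (p ^ n)))) (S.coeff t)) = (0 : RG p m n) := by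
    rw [← h0, Polynomial.aeval_eq_sum_range' hnd]
    refine (Finset.sum_congr rfl fun t _ => ?_).symm
    rw [sg_pow, MonoidAlgebra.of_apply, MonoidAlgebra.smul_single]
    simp
  apply hS
  ext t
  simp only [Polynomial.coeff_zero]
  rcases lt_or_ge t (p ^ n) with ht | ht
  · have h := DFunLike.congr_fun (congrArg MonoidAlgebra.coeff hsum) (Multiplicative.ofAdd ((t : ZMod (p ^ n))))
    rw [MonoidAlgebra.coeff_sum, Finsupp.finset_sum_apply] at h
    simp only [MonoidAlgebra.coeff_zero, Finsupp.coe_zero, Pi.zero_apply] at h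
    rw [Finset.sum_eq_single_of_mem t (Finset.mem_range.mpr ht)] at h
    · simpa using h
    · intro b hb hbt
      rw [MonoidAlgebra.coeff_single, Finsupp.single_apply, if_neg]
      intro hEq
      apply hbt
      have : ((b : ZMod (p ^ n))) = ((t : ZMod (p ^ n))) := by
        exact Multiplicative.ofAdd.injective hEq
      have hb' := ZMod.val_natCast_of_lt (Finset.mem_range.mp hb)
      have ht' := ZMod.val_natCast_of_lt ht
      rw [← hb', ← ht', this]
  · exact Polynomial.coeff_eq_zero_of_natDegree_lt (lt_of_lt_of_le hnd ht)

private lemma lift_pk (p m k : ℕ) (hp : p.Prime) (hm : 1 ≤ m) (C0 : ℤ)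
    (hk : (p : ℤ) ^ m ∣ (p : ℤ) ^ k * C0)
    (hkmin : ∀ v : ℕ, v < k → ¬ (p : ℤ) ^ m ∣ (p : ℤ) ^ v * C0)
    (t : Rm p m) (ht : t * ((C0 : ℤ) : Rm p m) = 0) :
    ∃ u : Rm p m, t = (p : Rm p m) ^ k * u := by
  haveI : NeZero (p ^ m) := ⟨(pow_pos hp.pos m).ne'⟩
  have hpz : (p : ℤ) ≠ 0 := by exact_mod_cast hp.pos.ne'
  rcases Nat.eq_zero_or_pos k with rfl | hk1
  · exact ⟨t, by simp⟩
  have hkm : k ≤ m := by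
    by_contra h
    exact hkmin m (by omega) (Dvd.intro C0 rfl)
  have hsplit : (p : ℤ) ^ m = (p : ℤ) ^ k * (p : ℤ) ^ (m - k) := by
    rw [← pow_add]; congr 1; omega
  have hC0 : (p : ℤ) ^ (m - k) ∣ C0 := by
    rw [hsplit] at hk
    exact (mul_dvd_mul_iff_left (pow_ne_zero k hpz)).mp hk
  obtain ⟨C1, hC1⟩ := hC0
  have hndvd : ¬ (p : ℤ) ∣ C1 := by
    intro ⟨C2, hC2⟩
    apply hkmin (k - 1) (by omega)
    refine ⟨C2, ?_⟩
    rw [hC1, hC2, ← mul_assoc, ← mul_assoc, ← pow_add, ← pow_succ]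
    congr 2
    omega
  have htt : (((t.val : ℕ)) : Rm p m) = t := by
    rw [ZMod.natCast_val, ZMod.cast_id]
  have hdvd : (p : ℤ) ^ m ∣ (t.val : ℤ) * C0 := by
    have : (((t.val : ℤ) * C0 : ℤ) : Rm p m) = 0 := by
      push_cast
      rw [htt]
      exact ht
    have := (ZMod.intCast_zmod_eq_zero_iff_dvd _ (p ^ m)).mp this
    exact_mod_cast this
  have hdvd2 : (p : ℤ) ^ k ∣ (t.val : ℤ) * C1 := by
    have h1 : (t.val : ℤ) * C0 = ((t.val : ℤ) * C1) * (p : ℤ) ^ (m - k) := by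
      rw [hC1]; ring
    rw [h1, hsplit] at hdvd
    exact (mul_dvd_mul_iff_right (pow_ne_zero (m - k) hpz)).mp hdvd
  have hcop : IsCoprime ((p : ℤ) ^ k) C1 :=
    (((Nat.prime_iff_prime_int.mp hp)).coprime_iff_not_dvd.mpr hndvd).pow_left
  obtain ⟨u', hu'⟩ := hcop.dvd_of_dvd_mul_right hdvd2
  refine ⟨((u' : ℤ) : Rm p m), ?_⟩
  have h2 : (((t.val : ℤ)) : Rm p m) = t := by push_cast; exact htt
  rw [← h2, hu']
  push_cast
  ring

/-- Lemma 2.6 (`le:phidb`). -/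
theorem ann_sigma_sub_d (p n m : ℕ) (hp : p.Prime) (hm : 1 ≤ m) (i : ℕ) (hin : i ≤ n)
    (d : ℤ) (hd : d ∈ Uset p 1) (k : ℕ)
    (hk : (p : ℤ) ^ m ∣ (p : ℤ) ^ k * (d ^ p ^ i - 1))
    (hkmin : ∀ v : ℕ, v < k → ¬ (p : ℤ) ^ m ∣ (p : ℤ) ^ v * (d ^ p ^ i - 1)) :
    {s : RG p m i | s * (sg p m i - (d : RG p m i)) = 0} =
      ↑(Ideal.span {(p : RG p m i) ^ k * Qel p m i d i 0}) := by

  have hp0 : 0 < p := hp.pos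
  haveI : Fact (1 < p ^ m) := ⟨Nat.one_lt_pow (by omega) hp.one_lt⟩
  set N := p ^ i with hNdef
  set σ := sg p m i with hσ
  set dR : Rm p m := ((d : ℤ) : Rm p m) with hdR
  have halg : algebraMap (Rm p m) (RG p m i) dR = (d : RG p m i) := by
    rw [hdR, map_intCast]
  -- Qel simplification
  have hQel : Qel p m i d i 0 = ∑ j ∈ Finset.range N, σ ^ j * (d : RG p m i) ^ (N - 1 - j) := by
    rw [Qel]
    simp only [Nat.sub_zero, pow_zero, pow_one, one_mul, ← hNdef, ← hσ]
    exact Finset.sum_congr rfl fun j _ => mul_comm _ _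
  have hgeom : Qel p m i d i 0 * (σ - (d : RG p m i)) = 1 - (d : RG p m i) ^ N := by
    rw [hQel, geom_sum₂_mul, hσ, hNdef, sg_pow_card]
  -- p^k * (d^N - 1) = 0 in RG
  have hker : ((p : RG p m i)) ^ k * ((d : RG p m i) ^ N - 1) = 0 := by
    have h1 : (((p:ℤ) ^ k * (d ^ (p ^ i) - 1) : ℤ) : RG p m i) = 0 := by
      have h2 : (((p:ℤ) ^ k * (d ^ (p ^ i) - 1) : ℤ) : Rm p m) = 0 := by
        rw [ZMod.intCast_zmod_eq_zero_iff_dvd]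
        exact_mod_cast hk
      rw [← map_intCast (algebraMap (Rm p m) (RG p m i)), h2, map_zero]
    push_cast at h1
    exact h1
  have hmul0 : ((p : RG p m i) ^ k * Qel p m i d i 0) * (σ - (d : RG p m i)) = 0 := by
    rw [mul_assoc, hgeom]
    linear_combination -hker
  haveI : NeZero N := ⟨(pow_pos hp0 i).ne'⟩
  have hN0 : N ≠ 0 := (pow_pos hp0 i).ne'
  ext s
  simp only [Set.mem_setOf_eq, SetLike.mem_coe, Ideal.mem_span_singleton]
  constructor
  · intro hs
    obtain ⟨S0, hS0⟩ := aeval_surj p m i hp0 s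
    set B : Polynomial (Rm p m) := Polynomial.X ^ N - Polynomial.C 1 with hB
    have hBm : B.Monic := Polynomial.monic_X_pow_sub_C 1 hN0
    have hBdeg : B.degree = (N : ℕ) := Polynomial.degree_X_pow_sub_C (Nat.pos_of_ne_zero hN0) 1
    have hψB : Polynomial.aeval σ B = 0 := by
      rw [hB]
      simp only [map_sub, map_pow, Polynomial.aeval_X, Polynomial.aeval_C, map_one]
      rw [hσ, hNdef, sg_pow_card]
      ring
    set S := S0 %ₘ B with hSdef
    have hψS : Polynomial.aeval σ S = s := by
      have h3 := Polynomial.modByMonic_add_div S0 B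
      have h4 := congrArg (Polynomial.aeval σ) h3
      rw [map_add, map_mul, hψB, zero_mul, add_zero, hS0] at h4
      exact h4
    have hSdeg : S.degree < (N : ℕ) := by
      rw [← hBdeg]; exact Polynomial.degree_modByMonic_lt S0 hBm
    rcases eq_or_ne S 0 with hS0' | hSne
    · exact ⟨0, by rw [← hψS, hS0', map_zero, mul_zero]⟩
    set F := S * (Polynomial.X - Polynomial.C dR) with hF
    have hψF : Polynomial.aeval σ F = 0 := by
      rw [hF, map_mul, hψS, map_sub, Polynomial.aeval_X, Polynomial.aeval_C, halg]
      exact hs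
    set T := F /ₘ B with hT
    have hrem : F %ₘ B = 0 := by
      apply aeval_ker p m i hp0
      · rw [← hBdeg]; exact Polynomial.degree_modByMonic_lt F hBm
      · have h3 := Polynomial.modByMonic_add_div F B
        have h4 := congrArg (Polynomial.aeval σ) h3
        rw [map_add, map_mul, hψB, zero_mul, add_zero, hψF] at h4
        exact h4
    have hFBT : F = B * T := by
      have h3 := Polynomial.modByMonic_add_div F B
      rw [hrem, zero_add] at h3
      exact h3.symm
    -- T is a constant
    have hTdeg : T.natDegree = 0 := by
      have h5 : T.natDegree = F.natDegree - B.natDegree := by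
        rw [hT]; exact Polynomial.natDegree_divByMonic F hBm
      have hBnd : B.natDegree = N := Polynomial.natDegree_X_pow_sub_C
      have hFnd : F.natDegree ≤ N := by
        calc F.natDegree ≤ S.natDegree + (Polynomial.X - Polynomial.C dR).natDegree :=
              Polynomial.natDegree_mul_le
          _ ≤ (N - 1) + 1 := by
              gcongr
              · have := (Polynomial.natDegree_lt_iff_degree_lt hSne).mpr hSdeg
                omega
              · exact le_of_eq (Polynomial.natDegree_X_sub_C dR)
          _ ≤ N := by omega
      omega
    obtain ⟨t, hTC⟩ := Polynomial.natDegree_eq_zero.mp hTdeg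
    -- evaluate at dR
    have hteval : t * (dR ^ N - 1) = 0 := by
      have h6 := congrArg (Polynomial.eval dR) hFBT
      rw [hF, hB, ← hTC] at h6
      simp only [Polynomial.eval_mul, Polynomial.eval_sub, Polynomial.eval_X,
        Polynomial.eval_C, Polynomial.eval_pow, Polynomial.eval_one, sub_self, mul_zero] at h6
      linear_combination -h6
    have htc : t * (((d ^ (p ^ i) - 1 : ℤ)) : Rm p m) = 0 := by
      have : (((d ^ (p ^ i) - 1 : ℤ)) : Rm p m) = dR ^ N - 1 := by
        rw [hdR, hNdef]; push_cast; ring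
      rw [this]; exact hteval
    obtain ⟨u, hu⟩ := lift_pk p m k hp hm _ hk hkmin t htc
    -- geom identity in polynomials
    set Qp : Polynomial (Rm p m) :=
      ∑ j ∈ Finset.range N, Polynomial.X ^ j * (Polynomial.C dR) ^ (N - 1 - j) with hQp
    have hQgeom : Qp * (Polynomial.X - Polynomial.C dR)
        = Polynomial.X ^ N - Polynomial.C (dR ^ N) := by
      rw [hQp, geom_sum₂_mul, map_pow]
    have hBQ : B * Polynomial.C t = (Polynomial.C t * Qp) * (Polynomial.X - Polynomial.C dR) := by
      have hct : Polynomial.C t * Polynomial.C (dR ^ N - 1) = 0 := by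
        rw [← Polynomial.C_mul, hteval, Polynomial.C_0]
      calc B * Polynomial.C t
          = Polynomial.C t * (Polynomial.X ^ N - Polynomial.C (dR ^ N))
            + Polynomial.C t * Polynomial.C (dR ^ N - 1) := by
            rw [hB]; push_cast [Polynomial.C_sub]; ring
        _ = Polynomial.C t * (Qp * (Polynomial.X - Polynomial.C dR)) := by
            rw [hct, add_zero, hQgeom]
        _ = (Polynomial.C t * Qp) * (Polynomial.X - Polynomial.C dR) := by ring
    have hScQ : S = Polynomial.C t * Qp := by
      have hreg : IsRightRegular (Polynomial.X - Polynomial.C dR) :=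
        (Polynomial.monic_X_sub_C dR).isRegular.right
      have hmm : S * (Polynomial.X - Polynomial.C dR)
          = (Polynomial.C t * Qp) * (Polynomial.X - Polynomial.C dR) := by
        rw [← hF, hFBT, ← hTC]; exact hBQ
      exact hreg hmm
    -- aeval of Qp is Qel
    have hQpel : Polynomial.aeval σ Qp = Qel p m i d i 0 := by
      rw [hQp, hQel, map_sum]
      refine Finset.sum_congr rfl fun j _ => ?_
      rw [map_mul, map_pow, map_pow, Polynomial.aeval_X, Polynomial.aeval_C, halg]
    refine ⟨algebraMap (Rm p m) (RG p m i) u, ?_⟩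
    rw [← hψS, hScQ, map_mul, Polynomial.aeval_C, hQpel, hu]
    rw [map_mul, map_pow, map_natCast]
    ring
  · rintro ⟨r, rfl⟩
    rw [mul_assoc, mul_comm r, ← mul_assoc, hmul0, zero_mul]
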